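/- Let G=(V,E) be a directed graph on V=[p] containing all self-loops, and let C be a diagonal positive definite p×p real matrix. Then the graphical continuous Lyapunov model M_{G,C} is globally identifiable if and only if G is simple. -/

import Mathlib

open Matrix MeasureTheory

/-- A real square matrix is *stable* if every eigenvalue (over `ℂ`) has strictly
negative real part. -/
def IsStableMat {n : Type*} [Fintype n] [DecidableEq n] (M : Matrix n n ℝ) : Prop :=
  ∀ μ ∈ spectrum ℂ (M.map (algebraMap ℝ ℂ)), μ.re < 0

/-- `M ∈ ℝ^E`: the matrix `M` is supported on the directed graph with edge set `E`,
i.e. `M j i = 0` whenever `(i, j) ∉ E`. -/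
def InSupp {n : Type*} (E : Set (n × n)) (M : Matrix n n ℝ) : Prop :=
  ∀ i j : n, (i, j) ∉ E → M j i = 0

/-- The graphical continuous Lyapunov model `M_{G,C}`: positive definite matrices `S`
such that `M * S + S * Mᵀ + C = 0` for some `M ∈ ℝ^E`. -/
def LyapModel {n : Type*} [Fintype n] [DecidableEq n] (E : Set (n × n))
    (C : Matrix n n ℝ) : Set (Matrix n n ℝ) :=
  {S | S.PosDef ∧ ∃ M : Matrix n n ℝ, InSupp E M ∧ M * S + S * Mᵀ + C = 0}

/-- Global identifiability: no two stable matrices supported on `E` yield the same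
solution of the Lyapunov equation.  (Since for stable `M` the Lyapunov equation has a
unique positive definite solution `Σ(M,C)`, this is equivalent to every fiber
`F_{G,C}(M₀)` being the singleton `{M₀}`.) -/
def GloballyIdentifiable {n : Type*} [Fintype n] [DecidableEq n] (E : Set (n × n))
    (C : Matrix n n ℝ) : Prop :=
  ∀ M₁ M₂ : Matrix n n ℝ,
    InSupp E M₁ → IsStableMat M₁ → InSupp E M₂ → IsStableMat M₂ →
    ∀ S : Matrix n n ℝ, S.PosDef →
      M₁ * S + S * M₁ᵀ + C = 0 → M₂ * S + S * M₂ᵀ + C = 0 → M₁ = M₂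

/-- A directed graph is *simple* if it has no 2-cycles between distinct nodes. -/
def IsSimpleDigraph {n : Type*} (E : Set (n × n)) : Prop :=
  ∀ i j : n, i ≠ j → (i, j) ∈ E → (j, i) ∉ E

/-- The fiber `F_{G,C}(M₀)`: all stable matrices supported on `E` whose Lyapunov
solution coincides with that of `M₀`, i.e. some positive definite `S` solves the
Lyapunov equation for both `M₀` and `M`. -/
def Fiber {n : Type*} [Fintype n] [DecidableEq n] (E : Set (n × n))
    (C M₀ : Matrix n n ℝ) : Set (Matrix n n ℝ) :=
  {M | InSupp E M ∧ IsStableMat M ∧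
    ∃ S : Matrix n n ℝ, S.PosDef ∧ M₀ * S + S * M₀ᵀ + C = 0 ∧ M * S + S * Mᵀ + C = 0}

/-- The identification of the coordinate space `ℝ^{|E|}` with the matrices in `ℝ^E`:
the coordinate attached to an edge `(i,j)` is the entry `M j i`. -/
def edgeMatrix {p : ℕ} (E : Finset (Fin p × Fin p)) (f : E → ℝ) :
    Matrix (Fin p) (Fin p) ℝ :=
  fun j i => if h : (i, j) ∈ E then f ⟨(i, j), h⟩ else 0

/-- Generic identifiability: the set of parameter vectors `f ∈ ℝ^{|E|}` whose matrix
is stable but whose fiber is not a singleton is a Lebesgue null set. -/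
def GenericallyIdentifiable {p : ℕ} (E : Finset (Fin p × Fin p))
    (C : Matrix (Fin p) (Fin p) ℝ) : Prop :=
  volume {f : E → ℝ | IsStableMat (edgeMatrix E f) ∧
    Fiber (E : Set (Fin p × Fin p)) C (edgeMatrix E f) ≠ {edgeMatrix E f}} = 0

section Aux

open Matrix
open scoped ComplexOrder
open scoped MatrixOrder

/-- The complexification of a real positive definite matrix is positive definite. -/
lemma mapC_posDef {n : Type*} [Fintype n] [DecidableEq n] {C : Matrix n n ℝ}
    (hC : C.PosDef) : (C.map (algebraMap ℝ ℂ)).PosDef := by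
  obtain ⟨R, hRR, hRsym, hRdet⟩ :
      ∃ R : Matrix n n ℝ, R * R = C ∧ Rᵀ = R ∧ R.det ≠ 0 := by
    refine ⟨CFC.sqrt C, CFC.sqrt_mul_sqrt_self C hC.posSemidef.nonneg, ?_, ?_⟩
    · rw [← Matrix.conjTranspose_eq_transpose_of_trivial]
      exact (CFC.sqrt_nonneg C).posSemidef.1
    · intro h
      have : C.det = 0 := by
        rw [← CFC.sqrt_mul_sqrt_self C hC.posSemidef.nonneg, Matrix.det_mul, h, mul_zero]
      exact hC.det_pos.ne' this
  have hAdet : (R.map (algebraMap ℝ ℂ)).det ≠ 0 := by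
    rw [← RingHom.mapMatrix_apply, ← RingHom.map_det]
    simpa using hRdet
  have hCA : C.map (algebraMap ℝ ℂ) =
      (R.map (algebraMap ℝ ℂ))ᴴ * (R.map (algebraMap ℝ ℂ)) := by
    have hAH : (R.map (algebraMap ℝ ℂ))ᴴ = R.map (algebraMap ℝ ℂ) := by
      ext a b
      rw [Matrix.conjTranspose_apply, Matrix.map_apply, Matrix.map_apply]
      have hab : R b a = R a b := by
        conv_lhs => rw [← hRsym]
        rw [Matrix.transpose_apply]
      rw [hab]
      simp [Complex.coe_algebraMap, Complex.star_def, Complex.conj_ofReal]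
    rw [hAH, ← hRR, Matrix.map_mul]
  rw [Matrix.posDef_iff_dotProduct_mulVec]
  constructor
  · rw [hCA]
    exact Matrix.isHermitian_conjTranspose_mul_self _
  · intro v hv
    rw [hCA, ← Matrix.mulVec_mulVec, Matrix.dotProduct_mulVec, ← Matrix.star_mulVec]
    refine dotProduct_star_self_pos_iff.mpr ?_
    intro h0
    exact hAdet (Matrix.exists_mulVec_eq_zero_iff.mp ⟨v, hv, h0⟩)


/-- A real matrix whose symmetric part is negative definite is stable. -/
lemma isStableMat_of_sym_neg {n : Type*} [Fintype n] [DecidableEq n]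
    {M C : Matrix n n ℝ} (hC : C.PosDef) (h : M + Mᵀ = -C) : IsStableMat M := by
  intro μ hμ
  rw [spectrum.mem_iff] at hμ
  have hdet : (algebraMap ℂ (Matrix n n ℂ) μ - M.map (algebraMap ℝ ℂ)).det = 0 := by
    by_contra hd
    exact hμ ((Matrix.isUnit_iff_isUnit_det _).mpr (isUnit_iff_ne_zero.mpr hd))
  obtain ⟨v, hv, hv0⟩ := Matrix.exists_mulVec_eq_zero_iff.mpr hdet
  have hAv : (M.map (algebraMap ℝ ℂ)) *ᵥ v = μ • v := by
    rw [Matrix.sub_mulVec] at hv0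
    have h1 : (algebraMap ℂ (Matrix n n ℂ) μ) *ᵥ v = μ • v := by
      rw [Algebra.algebraMap_eq_smul_one, Matrix.smul_mulVec, Matrix.one_mulVec]
    rw [h1] at hv0
    exact (sub_eq_zero.mp hv0).symm
  have hkey : star v ⬝ᵥ ((M.map (algebraMap ℝ ℂ)) *ᵥ v) = μ * (star v ⬝ᵥ v) := by
    rw [hAv, dotProduct_smul, smul_eq_mul]
  have hconj : star (star v ⬝ᵥ ((M.map (algebraMap ℝ ℂ)) *ᵥ v)) =
      star v ⬝ᵥ ((M.map (algebraMap ℝ ℂ))ᴴ *ᵥ v) := by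
    rw [Matrix.star_dotProduct, star_star, Matrix.dotProduct_mulVec, ← Matrix.star_mulVec]
  have hAH : (M.map (algebraMap ℝ ℂ))ᴴ = Mᵀ.map (algebraMap ℝ ℂ) := by
    ext a b
    rw [Matrix.conjTranspose_apply, Matrix.map_apply, Matrix.map_apply,
      Matrix.transpose_apply]
    simp [Complex.coe_algebraMap, Complex.star_def, Complex.conj_ofReal]
  have hmapadd : M.map (algebraMap ℝ ℂ) + Mᵀ.map (algebraMap ℝ ℂ) =
      -(C.map (algebraMap ℝ ℂ)) := by
    rw [← Matrix.map_add _ (fun a b => by simp) M Mᵀ, h]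
    ext a b
    simp [Matrix.map_apply]
  have hsum : μ * (star v ⬝ᵥ v) + star (μ * (star v ⬝ᵥ v)) =
      -(star v ⬝ᵥ ((C.map (algebraMap ℝ ℂ)) *ᵥ v)) := by
    rw [← hkey, hconj, hAH, ← dotProduct_add, ← Matrix.add_mulVec, hmapadd,
      Matrix.neg_mulVec, dotProduct_neg]
  have hq : (0 : ℂ) < star v ⬝ᵥ ((C.map (algebraMap ℝ ℂ)) *ᵥ v) := (mapC_posDef hC).dotProduct_mulVec_pos hv
  have hs : (0 : ℂ) < star v ⬝ᵥ v := dotProduct_star_self_pos_iff.mpr hv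
  rw [Complex.lt_def] at hq hs
  have hre := congrArg Complex.re hsum
  simp only [Complex.add_re, Complex.star_def, Complex.conj_re, Complex.neg_re,
    Complex.mul_re] at hre
  obtain ⟨hq1, hq2⟩ := hq
  obtain ⟨hs1, hs2⟩ := hs
  simp only [Complex.zero_re, Complex.zero_im] at hq1 hq2 hs1 hs2
  rw [← hs2, mul_zero, sub_zero] at hre
  nlinarith [hre, hs1, hq1]


/-- Key cancellation: if `Δ S + S Δᵀ = 0` for positive definite `S` and the off-diagonal
entries of `Δ` satisfy `Δ i j * Δ j i = 0`, then `Δ = 0`. -/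
lemma delta_eq_zero {n : Type*} [Fintype n] [DecidableEq n] {S Δ : Matrix n n ℝ}
    (hS : S.PosDef) (hlyap : Δ * S + S * Δᵀ = 0)
    (hprod : ∀ i j : n, i ≠ j → Δ i j * Δ j i = 0) : Δ = 0 := by
  obtain ⟨R, hRR, hRsym, hRdet⟩ :
      ∃ R : Matrix n n ℝ, R * R = S ∧ Rᵀ = R ∧ IsUnit R.det := by
    refine ⟨CFC.sqrt S, CFC.sqrt_mul_sqrt_self S hS.posSemidef.nonneg, ?_, ?_⟩
    · rw [← Matrix.conjTranspose_eq_transpose_of_trivial]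
      exact (CFC.sqrt_nonneg S).posSemidef.1
    · rw [isUnit_iff_ne_zero]
      intro h
      have : S.det = 0 := by
        rw [← CFC.sqrt_mul_sqrt_self S hS.posSemidef.nonneg, Matrix.det_mul, h, mul_zero]
      exact hS.det_pos.ne' this
  have hRi : R * R⁻¹ = 1 := Matrix.mul_nonsing_inv R hRdet
  have hiR : R⁻¹ * R = 1 := Matrix.nonsing_inv_mul R hRdet
  set T : Matrix n n ℝ := R⁻¹ * Δ * R with hTdef
  have hΔeq : R * T * R⁻¹ = Δ := by
    rw [hTdef]
    calc R * (R⁻¹ * Δ * R) * R⁻¹ = (R * R⁻¹) * Δ * (R * R⁻¹) := by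
          simp only [Matrix.mul_assoc]
      _ = Δ := by rw [hRi, Matrix.one_mul, Matrix.mul_one]
  have hSΔ : S * Δᵀ = -(Δ * S) := eq_neg_of_add_eq_zero_right hlyap
  have hskew : Tᵀ = -T := by
    have h2 : R⁻¹ * (S * Δᵀ) * R⁻¹ = R⁻¹ * (-(Δ * S)) * R⁻¹ := by rw [hSΔ]
    have hL : R⁻¹ * (S * Δᵀ) * R⁻¹ = R * Δᵀ * R⁻¹ := by
      rw [← hRR]
      calc R⁻¹ * (R * R * Δᵀ) * R⁻¹ = (R⁻¹ * R) * (R * Δᵀ * R⁻¹) := by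
            simp only [Matrix.mul_assoc]
        _ = R * Δᵀ * R⁻¹ := by rw [hiR, Matrix.one_mul]
    have hRt : R⁻¹ * (-(Δ * S)) * R⁻¹ = -(R⁻¹ * Δ * R) := by
      rw [← hRR]
      calc R⁻¹ * (-(Δ * (R * R))) * R⁻¹ = -(R⁻¹ * Δ * R * (R * R⁻¹)) := by
            simp only [Matrix.mul_neg, Matrix.neg_mul, Matrix.mul_assoc]
        _ = -(R⁻¹ * Δ * R) := by rw [hRi, Matrix.mul_one]
    rw [hTdef, Matrix.transpose_mul, Matrix.transpose_mul, hRsym,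
      Matrix.transpose_nonsing_inv, hRsym]
    rw [← Matrix.mul_assoc, ← hL, h2, hRt, ← hTdef]
  have htr1 : Matrix.trace (T * T) = Matrix.trace (Δ * Δ) := by
    have : T * T = R⁻¹ * (Δ * Δ * R) := by
      rw [hTdef]
      calc (R⁻¹ * Δ * R) * (R⁻¹ * Δ * R)
          = R⁻¹ * Δ * (R * R⁻¹) * Δ * R := by simp only [Matrix.mul_assoc]
        _ = R⁻¹ * (Δ * Δ * R) := by
            rw [hRi, Matrix.mul_one]
            simp only [Matrix.mul_assoc]
    rw [this, Matrix.trace_mul_comm]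
    calc Matrix.trace (Δ * Δ * R * R⁻¹) = Matrix.trace (Δ * Δ * (R * R⁻¹)) := by
          simp only [Matrix.mul_assoc]
      _ = Matrix.trace (Δ * Δ) := by rw [hRi, Matrix.mul_one]
  have htr2 : Matrix.trace (Δ * Δ) = ∑ i, (Δ i i)^2 := by
    rw [Matrix.trace]
    refine Finset.sum_congr rfl fun i _ => ?_
    rw [Matrix.diag_apply, Matrix.mul_apply]
    rw [Finset.sum_eq_single i]
    · rw [sq]
    · intro j _ hji
      rw [hprod i j (fun h => hji (h.symm ▸ rfl))]
    · intro h
      exact absurd (Finset.mem_univ i) h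
  have htr3 : Matrix.trace (T * T) = -∑ i, ∑ j, (T i j)^2 := by
    have hTT : T * T = -(T * Tᵀ) := by rw [hskew, Matrix.mul_neg, neg_neg]
    rw [hTT, Matrix.trace_neg, neg_inj, Matrix.trace]
    refine Finset.sum_congr rfl fun i _ => ?_
    rw [Matrix.diag_apply, Matrix.mul_apply]
    refine Finset.sum_congr rfl fun j _ => ?_
    rw [Matrix.transpose_apply, sq]
  have hzero : ∑ i, ∑ j, (T i j)^2 = 0 := by
    have h1 : (0:ℝ) ≤ ∑ i, (Δ i i)^2 := Finset.sum_nonneg fun i _ => sq_nonneg _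
    have h2 : (0:ℝ) ≤ ∑ i, ∑ j, (T i j)^2 :=
      Finset.sum_nonneg fun i _ => Finset.sum_nonneg fun j _ => sq_nonneg _
    have h3 : ∑ i, (Δ i i)^2 = -∑ i, ∑ j, (T i j)^2 := by rw [← htr2, ← htr1, htr3]
    linarith
  have hT0 : T = 0 := by
    ext i j
    have hrow := (Finset.sum_eq_zero_iff_of_nonneg
      (fun i _ => Finset.sum_nonneg fun j _ => sq_nonneg (T i j))).mp hzero i
      (Finset.mem_univ i)
    have := (Finset.sum_eq_zero_iff_of_nonneg (fun j _ => sq_nonneg (T i j))).mp hrow j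
      (Finset.mem_univ j)
    simpa using pow_eq_zero_iff (n := 2) (by norm_num) |>.mp this
  rw [← hΔeq, hT0, Matrix.mul_zero, Matrix.zero_mul]

end Aux

/-- for diagonal positive definite `C`, the model `M_{G,C}` is globally
identifiable if and only if `G` is simple. -/
theorem globally_identifiable_iff_simple_of_diagonal {p : ℕ}
    (E : Set (Fin p × Fin p)) (hloops : ∀ i : Fin p, (i, i) ∈ E)
    (C : Matrix (Fin p) (Fin p) ℝ) (hC : C.PosDef)
    (hdiag : ∀ i j : Fin p, i ≠ j → C i j = 0) :
    GloballyIdentifiable E C ↔ IsSimpleDigraph E := by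
  constructor
  · intro hGI i j hij hijE hjiE
    have hCsym : Cᵀ = C := by
      rw [← Matrix.conjTranspose_eq_transpose_of_trivial]; exact hC.1
    set K : Matrix (Fin p) (Fin p) ℝ :=
      Matrix.single j i 1 - Matrix.single i j 1 with hK
    set M₁ : Matrix (Fin p) (Fin p) ℝ := (-(1/2) : ℝ) • C with hM₁
    have hM₁T : M₁ᵀ = M₁ := by rw [hM₁, Matrix.transpose_smul, hCsym]
    have hKT : Kᵀ = -K := by
      rw [hK]
      ext a b
      simp only [Matrix.transpose_apply, Matrix.sub_apply, Matrix.neg_apply,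
        Matrix.single, Matrix.of_apply]
      by_cases h1 : j = a ∧ i = b <;> by_cases h2 : i = a ∧ j = b <;>
        simp [h1, h2, and_comm] <;> try tauto
    have hM₁sym : M₁ + M₁ᵀ = -C := by
      rw [hM₁T, hM₁]
      module
    have hM₂sym : (M₁ + K) + (M₁ + K)ᵀ = -C := by
      rw [Matrix.transpose_add, hKT, hM₁T]
      calc M₁ + K + (M₁ + -K) = M₁ + M₁ᵀ := by rw [hM₁T]; abel
        _ = -C := hM₁sym
    have lyap : ∀ {M : Matrix (Fin p) (Fin p) ℝ}, M + Mᵀ = -C →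
        M * 1 + 1 * Mᵀ + C = 0 := by
      intro M hM
      rw [Matrix.mul_one, Matrix.one_mul, hM, neg_add_cancel]
    have hsuppM₁ : InSupp E M₁ := by
      intro a b hab
      have hba : b ≠ a := by rintro rfl; exact hab (hloops _)
      rw [hM₁]
      simp [Matrix.smul_apply, hdiag b a hba]
    have hsuppM₂ : InSupp E (M₁ + K) := by
      intro a b hab
      have hKz : K b a = 0 := by
        have hne1 : ¬(j = b ∧ i = a) := by rintro ⟨rfl, rfl⟩; exact hab hijE
        have hne2 : ¬(i = b ∧ j = a) := by rintro ⟨rfl, rfl⟩; exact hab hjiE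
        rw [hK, Matrix.sub_apply, Matrix.single_apply_of_ne (h := hne1),
          Matrix.single_apply_of_ne (h := hne2), sub_zero]
      rw [Matrix.add_apply, hKz, hsuppM₁ a b hab, add_zero]
    have heq := hGI M₁ (M₁ + K) hsuppM₁ (isStableMat_of_sym_neg hC hM₁sym) hsuppM₂
      (isStableMat_of_sym_neg hC hM₂sym) 1 Matrix.PosDef.one (lyap hM₁sym) (lyap hM₂sym)
    have hK0 : K = 0 := left_eq_add.mp heq
    have hji : K j i = 0 := by rw [hK0]; rfl
    rw [hK, Matrix.sub_apply, Matrix.single_apply_same,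
      Matrix.single_apply_of_ne (h := fun h => hij h.1), sub_zero] at hji
    exact one_ne_zero hji
  · intro hsimple M₁ M₂ h1s _ h2s _ S hS h₁ h₂
    have key : (M₁ - M₂) * S + S * (M₁ - M₂)ᵀ = 0 := by
      rw [Matrix.transpose_sub, Matrix.sub_mul, Matrix.mul_sub]
      calc M₁ * S - M₂ * S + (S * M₁ᵀ - S * M₂ᵀ)
          = (M₁ * S + S * M₁ᵀ + C) - (M₂ * S + S * M₂ᵀ + C) := by abel
        _ = 0 := by rw [h₁, h₂, sub_zero]
    have hprod : ∀ i j : Fin p, i ≠ j → (M₁ - M₂) i j * (M₁ - M₂) j i = 0 := by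
      intro i j hij
      by_cases hijE : (i, j) ∈ E
      · have hvan := hsimple i j hij hijE
        have hz : (M₁ - M₂) i j = 0 := by
          rw [Matrix.sub_apply, h1s j i hvan, h2s j i hvan, sub_zero]
        rw [hz, zero_mul]
      · have hz : (M₁ - M₂) j i = 0 := by
          rw [Matrix.sub_apply, h1s i j hijE, h2s i j hijE, sub_zero]
        rw [hz, mul_zero]
    exact sub_eq_zero.mp (delta_eq_zero hS key hprod)
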